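/- Let P be a poset with a lower semiclosed topology. If K is a nonempty compact subset of P and x ∈ K, then there exists a minimal element of K below x. -/
import Mathlib

/-- Wallace's lemma (strengthened): in a poset with a lower semiclosed topology,
every nonempty compact subset has, below each of its points, a minimal element. -/
theorem wallace_lemma {P : Type*} [PartialOrder P] [TopologicalSpace P]
    (hls : ∀ x : P, IsClosed (Set.Iic x))
    (K : Set P) (hne : K.Nonempty) (hK : IsCompact K) (x : P) (hx : x ∈ K) :
    ∃ m ∈ K, m ≤ x ∧ ∀ b ∈ K, b ≤ m → b = m := by
  have hz : ∀ c ⊆ K, IsChain (α := Pᵒᵈ) (· ≤ ·) c → ∀ y ∈ c,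
      ∃ ub ∈ K, ∀ z ∈ c, OrderDual.toDual z ≤ OrderDual.toDual ub := by
    intro c hcK hc y hy
    have hnec : Nonempty c := ⟨⟨y, hy⟩⟩
    by_contra h
    push_neg at h
    have hne2 : K ∩ ⋂ z : c, Set.Iic (z : P) = ∅ := by
      by_contra h2
      obtain ⟨w, hwK, hw⟩ := Set.nonempty_iff_ne_empty.mpr h2
      simp only [Set.mem_iInter] at hw
      obtain ⟨z, hzc, hz⟩ := h w hwK
      exact hz (hw ⟨z, hzc⟩)
    have hdir : Directed (· ⊇ ·) (fun z : c => Set.Iic (z : P)) := by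
      intro a b
      rcases hc.total a.2 b.2 with hab | hab
      · exact ⟨b, Set.Iic_subset_Iic.mpr (show (b : P) ≤ a from hab), subset_rfl⟩
      · exact ⟨a, subset_rfl, Set.Iic_subset_Iic.mpr (show (a : P) ≤ b from hab)⟩
    obtain ⟨z, hz⟩ := hK.elim_directed_family_closed (fun z : c => Set.Iic (z : P))
      (fun z => hls z) hne2 hdir
    exact absurd hz (Set.nonempty_iff_ne_empty.mp ⟨z, hcK z.2, le_refl (z : P)⟩)
  obtain ⟨m, hxm, hmK, hm⟩ := zorn_le_nonempty₀ (α := Pᵒᵈ) K hz x hx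
  exact ⟨m, hmK, hxm, fun b hb hbm => le_antisymm hbm (hm hb hbm)⟩
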